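/- If s ∈ R \ R^{G_a} has minimal degree among all noninvariants, then s is a local slice, i.e., every a ∈ R_c with deg(a) < deg(s) lies in (R_c)^{G_a}, where c is the highest coefficient of φ(s). -/

import Mathlib

open Polynomial

def IsGaCoaction {R : Type*} [CommRing R] (φ : R →+* Polynomial R) : Prop :=
  (∀ s : R, (φ s).eval 0 = s) ∧
  (∀ s : R, (φ s).map φ =
      (φ s).eval₂ ((Polynomial.C : Polynomial R →+* Polynomial (Polynomial R)).comp
        Polynomial.C) (Polynomial.X + Polynomial.C Polynomial.X))

/-- The leading coefficient of the image of any element under a `G_a`-coaction is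
invariant.  Obtained by comparing top coefficients in the coassociativity identity. -/
lemma ga_leadingCoeff_invariant {R : Type*} [CommRing R] [Nontrivial R]
    (φ : R →+* Polynomial R) (s : R)
    (h : (φ s).map φ =
      (φ s).eval₂ ((Polynomial.C : Polynomial R →+* Polynomial (Polynomial R)).comp
        Polynomial.C) (Polynomial.X + Polynomial.C Polynomial.X))
    (hs0 : φ s ≠ 0) :
    φ ((φ s).leadingCoeff) = Polynomial.C ((φ s).leadingCoeff) := by
  set p := φ s with hp
  set n := p.natDegree with hn
  have hco := congrArg (fun q => q.coeff n) h
  rw [coeff_map] at hco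
  rw [eval₂_eq_sum, Polynomial.sum_def, finset_sum_coeff] at hco
  rw [Finset.sum_eq_single n] at hco
  · rw [RingHom.comp_apply, coeff_C_mul] at hco
    have hmon : ((X + Polynomial.C (X : Polynomial R)) ^ n).Monic :=
      (monic_X_add_C _).pow n
    have hdeg : ((X + Polynomial.C (X : Polynomial R)) ^ n).natDegree = n := by
      rw [Monic.natDegree_pow (monic_X_add_C _), natDegree_X_add_C, mul_one]
    have h1 : ((X + Polynomial.C (X : Polynomial R)) ^ n).coeff n = 1 := by
      have := hmon.coeff_natDegree
      rwa [hdeg] at this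
    rw [h1, mul_one] at hco
    rw [hn] at hco
    unfold Polynomial.leadingCoeff
    exact hco
  · intro i hi hine
    have hile : i ≤ n := le_natDegree_of_ne_zero (mem_support_iff.mp hi)
    have hilt : i < n := lt_of_le_of_ne hile hine
    have hdeg : ((X + Polynomial.C (X : Polynomial R)) ^ i).natDegree = i := by
      rw [Monic.natDegree_pow (monic_X_add_C _), natDegree_X_add_C, mul_one]
    have hz : ((X + Polynomial.C (X : Polynomial R)) ^ i).coeff n = 0 :=
      coeff_eq_zero_of_natDegree_lt (by rw [hdeg]; exact hilt)
    rw [RingHom.comp_apply, coeff_C_mul, hz, mul_zero]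
  · intro hns
    rw [RingHom.comp_apply, notMem_support_iff.mp hns]
    simp

/-- a noninvariant `s` of minimal degree among all noninvariants is a local
slice: with `c` the leading coefficient of `φ s`, every element of the localization `R_c`
of degree `< deg s` (with respect to the extended coaction `φc`) is invariant. -/
theorem stmt2 {K R : Type*} [CommRing K] [CommRing R] [Algebra K R]
    (φ : R →ₐ[K] Polynomial R) (hφ : IsGaCoaction φ.toRingHom)
    (s : R) (hs : φ s ≠ Polynomial.C s)
    (hmin : ∀ a : R, φ a ≠ Polynomial.C a → (φ s).degree ≤ (φ a).degree)
    (c : R) (hc : c = (φ s).leadingCoeff)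
    (φc : Localization.Away c →+* Polynomial (Localization.Away c))
    (hext : ∀ r : R, φc (algebraMap R (Localization.Away c) r) =
      (φ r).map (algebraMap R (Localization.Away c))) :
    ∀ a : Localization.Away c, (φc a).degree < (φ s).degree → φc a = Polynomial.C a := by
  -- basic setup
  have hnt : Nontrivial R := by
    rcases subsingleton_or_nontrivial R with h | h
    · exact absurd (Subsingleton.elim _ _) hs
    · exact h
  have hs0 : φ s ≠ 0 := by
    intro h0
    have : s = 0 := by
      have := hφ.1 s
      simp only [AlgHom.toRingHom_eq_coe, RingHom.coe_coe] at this
      rw [h0] at this; simpa using this.symm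
    apply hs; rw [h0, this, map_zero]
  have hcinv : φ c = Polynomial.C c := by
    rw [hc]
    exact ga_leadingCoeff_invariant φ.toRingHom s (hφ.2 s) hs0
  -- the degree of φ s is positive
  have hdpos : (0 : WithBot ℕ) < (φ s).degree := by
    by_contra hle
    push_neg at hle
    apply hs
    have := eq_C_of_degree_le_zero hle
    have he : (φ s).coeff 0 = s := by
      have h1 := hφ.1 s
      simp only [AlgHom.toRingHom_eq_coe, RingHom.coe_coe] at h1
      rw [coeff_zero_eq_eval_zero]; exact h1
    rw [this, he]
  -- minimality: everything of smaller degree is invariant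
  have hminv : ∀ r : R, (φ r).degree < (φ s).degree → φ r = Polynomial.C r := by
    intro r hr
    by_contra hne
    exact absurd hr (not_lt.mpr (hmin r hne))
  set ι := algebraMap R (Localization.Away c) with hι
  have hu : IsUnit (ι c) :=
    IsLocalization.map_units (M := Submonoid.powers c) (Localization.Away c)
      ⟨c, Submonoid.mem_powers c⟩
  intro a ha
  -- the key cancellation step when the representative has small degree
  have case1 : ∀ (r : R) (k : ℕ), (φ r).degree < (φ s).degree →
      ι r = a * ι c ^ k → φc a = Polynomial.C a := by
    intro r k hrd hrk
    have hinv : φ r = Polynomial.C r := hminv r hrd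
    have h1 : φc (ι r) = Polynomial.C (ι r) := by
      rw [hext, hinv, map_C]
    have h2 : φc (ι c) = Polynomial.C (ι c) := by
      rw [hext, hcinv, map_C]
    have h3 : φc a * (Polynomial.C (ι c)) ^ k
        = Polynomial.C a * (Polynomial.C (ι c)) ^ k := by
      calc φc a * (Polynomial.C (ι c)) ^ k = φc (a * ι c ^ k) := by
            rw [map_mul, map_pow, h2]
        _ = Polynomial.C (ι r) := by rw [← hrk, h1]
        _ = Polynomial.C a * (Polynomial.C (ι c)) ^ k := by
            rw [hrk, map_mul, map_pow]
    exact ((hu.map Polynomial.C).pow k).mul_right_cancel h3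
  -- main induction: reduce the degree of a representative
  have main : ∀ (N : ℕ) (r : R) (k : ℕ), (φ r).natDegree ≤ N →
      ι r = a * ι c ^ k → φc a = Polynomial.C a := by
    intro N
    induction N with
    | zero =>
        intro r k hN hrk
        refine case1 r k ?_ hrk
        calc (φ r).degree ≤ ((φ r).natDegree : WithBot ℕ) := degree_le_natDegree
          _ ≤ (0 : ℕ) := by exact_mod_cast hN
          _ < (φ s).degree := hdpos
    | succ N ih =>
        intro r k hN hrk
        by_cases hlt : (φ r).degree < (φ s).degree
        · exact case1 r k hlt hrk
        · push_neg at hlt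
          have hr0 : φ r ≠ 0 := by
            intro h0
            rw [h0, degree_zero] at hlt
            exact absurd (lt_of_lt_of_le hdpos hlt) (by simp)
          set m := (φ r).natDegree with hm
          -- the image of φ r in the localization has small degree
          have himg : φc (ι r) = φc a * Polynomial.C (ι c ^ k) := by
            rw [hrk, map_mul, map_pow, hext, hcinv, map_C, map_pow]
          have hideg : ((φ r).map ι).degree < (φ s).degree := by
            rw [← hext, himg]
            calc (φc a * Polynomial.C (ι c ^ k)).degree
                ≤ (φc a).degree + (Polynomial.C (ι c ^ k)).degree := degree_mul_le _ _
              _ ≤ (φc a).degree + 0 := add_le_add le_rfl degree_C_le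
              _ = (φc a).degree := add_zero _
              _ < (φ s).degree := ha
          -- hence the top coefficient dies in the localization
          have hnc : ι ((φ r).coeff m) = 0 := by
            rw [← coeff_map]
            refine coeff_eq_zero_of_degree_lt ?_
            calc ((φ r).map ι).degree < (φ s).degree := hideg
              _ ≤ (φ r).degree := hlt
              _ ≤ (m : WithBot ℕ) := degree_le_natDegree
          obtain ⟨⟨u, j, hj⟩, hub⟩ :=
            (IsLocalization.map_eq_zero_iff (Submonoid.powers c)
              (Localization.Away c) _).mp hnc
          simp only at hub
          rw [← hj] at hub
          -- the new representative
          have hr' : ι (c ^ j * r) = a * ι c ^ (k + j) := by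
            rw [map_mul, map_pow, hrk, pow_add]; ring
          have hφr' : φ (c ^ j * r) = Polynomial.C (c ^ j) * φ r := by
            rw [map_mul, map_pow, hcinv, ← map_pow]
          have hdle : (φ (c ^ j * r)).natDegree ≤ N := by
            by_cases h0 : φ (c ^ j * r) = 0
            · rw [h0]; simp
            · have hcm : (φ (c ^ j * r)).coeff m = 0 := by
                rw [hφr', coeff_C_mul, hub]
              have hdle' : (φ (c ^ j * r)).degree ≤ (φ r).degree := by
                rw [hφr']
                calc (Polynomial.C (c ^ j) * φ r).degree
                    ≤ (Polynomial.C (c ^ j)).degree + (φ r).degree := degree_mul_le _ _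
                  _ ≤ 0 + (φ r).degree := add_le_add degree_C_le le_rfl
                  _ = (φ r).degree := zero_add _
              have hne : (φ (c ^ j * r)).natDegree ≠ m := by
                intro heq
                apply h0
                have : (φ (c ^ j * r)).leadingCoeff = 0 := by
                  rw [leadingCoeff, heq, hcm]
                exact leadingCoeff_eq_zero.mp this
              have : (φ (c ^ j * r)).natDegree ≤ m := by
                have := natDegree_le_natDegree hdle'
                exact this
              omega
          exact ih (c ^ j * r) (k + j) hdle hr'
  obtain ⟨⟨r, u⟩, hru⟩ := IsLocalization.surj (M := Submonoid.powers c)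
    (S := Localization.Away c) a
  obtain ⟨k, hk⟩ := u.2
  simp only at hru
  have : ι r = a * ι c ^ k := by
    rw [← hru, ← hk, map_pow]
  exact main (φ r).natDegree r k le_rfl this
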